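/- Let n ≥ 1, let 0 < λ ≤ 1/2, and let (x_α, u_α, T_α) be a differentiable solution on [0,∞) of the KB-CS model with metric-dependent weights a_{αβ}(t) = (1 + ‖x_β(t) − x_α(t)‖²)^{−λ}, whose initial data satisfy ∑_α x_α(0) = 0, ∑_α u_α(0) = 0, and (1/n)∑_α (T_α(0) + ½‖u_α(0)‖²) = T₀. Set Λ₀ := (max{1 + 2𝒳(0)², 2𝒱(0)²})^{−λ}. Then for all t ≥ 0: if λ < 1/2, 𝒱(t) ≤ 𝒱(0) exp( −(Λ₀/(1−2λ))((1+t)^{1−2λ} − 1) ) and ℰ(t) ≤ ℰ(0) exp( −(Λ₀/(1−2λ))((1+t)^{1−2λ} − 1) ); if λ = 1/2, 𝒱(t) ≤ 𝒱(0)(1+t)^{−Λ₀} and ℰ(t) ≤ ℰ(0)(1+t)^{−Λ₀}; and in both cases 𝒳(t) ≤ 𝒳(0) + 𝒱(0) ∫₀ᵗ D(s) ds, where D(s) denotes the corresponding decay factor. -/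

import Mathlib

open Finset Real Set

set_option maxHeartbeats 1000000

lemma quad_bound (w s X V M t : ℝ) (ht : 0 ≤ t) (hw : w ≤ 2 * s)
    (hs : s ≤ (X + V * t) ^ 2) (h1 : 1 + 2 * X ^ 2 ≤ M) (h2 : 2 * V ^ 2 ≤ M) :
    1 + w ≤ M * (1 + t) ^ 2 := by
  nlinarith [mul_nonneg ht (sub_nonneg.2 h1), mul_nonneg (mul_nonneg ht ht) (sub_nonneg.2 h2),
    mul_nonneg ht (sub_nonneg.2 h2), mul_nonneg ht (sq_nonneg (X - V))]
local notation "⟪" x ", " y "⟫" => @inner ℝ _ _ x y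

lemma sum_conserved {F : Type*} [NormedAddCommGroup F] [NormedSpace ℝ F]
    {n : ℕ} (v : Fin n → ℝ → F) (A : Fin n → Fin n → ℝ → ℝ)
    (hAsymm : ∀ α β t, A α β t = A β α t)
    (hv : ∀ α, ∀ t ≥ (0:ℝ), HasDerivAt (v α)
      ((n:ℝ)⁻¹ • ∑ β, A α β t • (v β t - v α t)) t) :
    ∀ t ≥ (0:ℝ), ∑ α, v α t = ∑ α, v α 0 := by
  intro t ht
  have key : ∀ s ≥ (0:ℝ), HasDerivAt (fun r => ∑ α, v α r) 0 s := by
    intro s hs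
    have h1 : HasDerivAt (fun r => ∑ α, v α r)
        (∑ α, (n:ℝ)⁻¹ • ∑ β, A α β s • (v β s - v α s)) s :=
      HasDerivAt.fun_sum (fun α _ => hv α s hs)
    convert h1 using 1
    have h2 : ∑ α, ∑ β, A α β s • (v β s - v α s) = 0 := by
      have hswap : ∑ α, ∑ β, A α β s • (v β s - v α s)
          = ∑ α, ∑ β, -(A α β s • (v β s - v α s)) := by
        rw [Finset.sum_comm]
        refine Finset.sum_congr rfl fun β _ => Finset.sum_congr rfl fun α _ => ?_
        rw [hAsymm β α s, ← smul_neg, neg_sub]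
      simp only [Finset.sum_neg_distrib] at hswap
      have h3 : (2:ℝ) • ∑ α, ∑ β, A α β s • (v β s - v α s) = 0 := by
        rw [two_smul]; nth_rewrite 1 [hswap]; simp
      rcases smul_eq_zero.1 h3 with h | h
      · norm_num at h
      · exact h
    simp [← Finset.smul_sum, h2]
  have := constant_of_has_deriv_right_zero (f := fun r => ∑ α, v α r) (a := 0) (b := t)
    (fun s hs => ((key s hs.1).continuousAt).continuousWithinAt)
    (fun s hs => (key s hs.1).hasDerivWithinAt)
  exact this t (Set.right_mem_Icc.2 ht)

lemma decay_lemma {F : Type*} [NormedAddCommGroup F] [InnerProductSpace ℝ F]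
    {n : ℕ} (hn : 0 < n) (v : Fin n → ℝ → F) (A : Fin n → Fin n → ℝ → ℝ)
    (hAsymm : ∀ α β t, A α β t = A β α t)
    (hv : ∀ α, ∀ t ≥ (0:ℝ), HasDerivAt (v α)
      ((n:ℝ)⁻¹ • ∑ β, A α β t • (v β t - v α t)) t)
    (hv0 : ∑ α, v α 0 = 0)
    (lamf ψ : ℝ → ℝ)
    (hψ : ∀ t ≥ (0:ℝ), HasDerivAt ψ (lamf t) t) (hψ0 : ψ 0 = 0)
    (hA : ∀ α β, ∀ t ≥ (0:ℝ), lamf t ≤ A α β t) :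
    ∀ t ≥ (0:ℝ), ∑ α, ‖v α t‖^2 ≤ (∑ α, ‖v α 0‖^2) * Real.exp (-2 * ψ t) := by
  have hnR : (0:ℝ) < n := Nat.cast_pos.2 hn
  have hsum : ∀ t ≥ (0:ℝ), ∑ α, v α t = 0 := fun t ht =>
    (sum_conserved v A hAsymm hv t ht).trans hv0
  set d : Fin n → ℝ → F := fun α t => (n:ℝ)⁻¹ • ∑ β, A α β t • (v β t - v α t) with hd
  set V2 : ℝ → ℝ := fun t => ∑ α, ‖v α t‖^2 with hV2
  set W : ℝ → ℝ := fun t => ∑ α, 2 * ⟪v α t, d α t⟫ with hW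
  have hV2deriv : ∀ t ≥ (0:ℝ), HasDerivAt V2 (W t) t := by
    intro t ht
    refine HasDerivAt.fun_sum fun α _ => ?_
    have h1 : HasDerivAt (fun s => ⟪v α s, v α s⟫)
        (⟪v α t, d α t⟫ + ⟪d α t, v α t⟫) t :=
      (hv α t ht).inner ℝ (hv α t ht)
    have h2 : HasDerivAt (fun s => ‖v α s‖^2) (2 * ⟪v α t, d α t⟫) t := by
      simp only [← real_inner_self_eq_norm_sq]
      convert h1 using 1
      rw [real_inner_comm (d α t) (v α t)]; ring
    exact h2
  -- key differential inequality
  have hkey : ∀ t ≥ (0:ℝ), W t + 2 * lamf t * V2 t ≤ 0 := by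
    intro t ht
    have hP : W t = 2 * (n:ℝ)⁻¹ * ∑ α, ∑ β, A α β t * ⟪v α t, v β t - v α t⟫ := by
      simp only [hW, hd, inner_smul_right, inner_sum, Finset.mul_sum, ← Finset.sum_mul,
        real_inner_smul_right]
      exact Finset.sum_congr rfl fun α _ => Finset.sum_congr rfl fun β _ => by ring
    set P : ℝ := ∑ α, ∑ β, A α β t * ⟪v α t, v β t - v α t⟫ with hPdef
    have h2P : 2 * P = -∑ α, ∑ β, A α β t * ‖v β t - v α t‖^2 := by
      have hswap : P = ∑ α, ∑ β, A α β t * ⟪v β t, v α t - v β t⟫ := by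
        rw [hPdef, Finset.sum_comm]
        exact Finset.sum_congr rfl fun β _ => Finset.sum_congr rfl fun α _ => by
          rw [hAsymm β α t]
      rw [two_mul]
      nth_rewrite 2 [hswap]
      rw [hPdef, ← Finset.sum_add_distrib, ← Finset.sum_neg_distrib]
      refine Finset.sum_congr rfl fun α _ => ?_
      rw [← Finset.sum_add_distrib, ← Finset.sum_neg_distrib]
      refine Finset.sum_congr rfl fun β _ => ?_
      have : ⟪v α t, v β t - v α t⟫ + ⟪v β t, v α t - v β t⟫
          = -‖v β t - v α t‖^2 := by
        have e1 := real_inner_self_eq_norm_sq (v β t - v α t)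
        rw [inner_sub_sub_self] at e1
        have e2 : ⟪v α t, v β t - v α t⟫ = ⟪v α t, v β t⟫ - ⟪v α t, v α t⟫ :=
          inner_sub_right _ _ _
        have e3 : ⟪v β t, v α t - v β t⟫ = ⟪v β t, v α t⟫ - ⟪v β t, v β t⟫ :=
          inner_sub_right _ _ _
        have e4 : ⟪v β t, v α t⟫ = ⟪v α t, v β t⟫ := real_inner_comm _ _
        linarith
      linear_combination A α β t * this
    have hQR : ∑ α, ∑ β, A α β t * ‖v β t - v α t‖^2
        ≥ lamf t * ∑ α, ∑ β, ‖v β t - v α t‖^2 := by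
      rw [Finset.mul_sum]
      refine Finset.sum_le_sum fun α _ => ?_
      rw [Finset.mul_sum]
      refine Finset.sum_le_sum fun β _ => ?_
      exact mul_le_mul_of_nonneg_right (hA α β t ht) (by positivity)
    have hR : ∑ α, ∑ β, ‖v β t - v α t‖^2 = 2 * (n:ℝ) * V2 t := by
      have expand : ∀ α β : Fin n, ‖v β t - v α t‖^2
          = ‖v β t‖^2 - 2 * ⟪v β t, v α t⟫ + ‖v α t‖^2 := fun α β =>
        norm_sub_sq_real _ _
      simp only [expand]
      rw [Finset.sum_congr rfl (fun α _ => Finset.sum_add_distrib),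
          Finset.sum_add_distrib]
      rw [Finset.sum_congr rfl (fun α _ => Finset.sum_sub_distrib _ _),
          Finset.sum_sub_distrib]
      have e1 : ∑ _α : Fin n, ∑ β, ‖v β t‖^2 = (n:ℝ) * V2 t := by
        rw [Finset.sum_const, Finset.card_univ, Fintype.card_fin, nsmul_eq_mul]
      have e2 : ∑ α : Fin n, ∑ _β : Fin n, ‖v α t‖^2 = (n:ℝ) * V2 t := by
        simp only [Finset.sum_const, Finset.card_univ, Fintype.card_fin, nsmul_eq_mul]
        rw [← Finset.mul_sum]
      have e3 : ∑ α : Fin n, ∑ β, 2 * ⟪v β t, v α t⟫ = 0 := by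
        have : ∑ α : Fin n, ∑ β, 2 * ⟪v β t, v α t⟫
            = 2 * ⟪∑ β, v β t, ∑ α, v α t⟫ := by
          rw [inner_sum, Finset.mul_sum]
          refine Finset.sum_congr rfl fun α _ => ?_
          rw [sum_inner, Finset.mul_sum]
        rw [this, hsum t ht, inner_zero_right, mul_zero]
      rw [e1, e2, e3]; ring
    have : W t ≤ -(2 * lamf t * V2 t) := by
      rw [hP]
      have : 2 * (n:ℝ)⁻¹ * P = (n:ℝ)⁻¹ * (2 * P) := by ring
      rw [← hPdef] at *
      rw [this, h2P]
      have h6 : (n:ℝ)⁻¹ * -(∑ α, ∑ β, A α β t * ‖v β t - v α t‖^2)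
          ≤ (n:ℝ)⁻¹ * -(lamf t * (2 * (n:ℝ) * V2 t)) := by
        apply mul_le_mul_of_nonneg_left _ (by positivity)
        rw [← hR]; linarith [hQR]
      calc (n:ℝ)⁻¹ * -(∑ α, ∑ β, A α β t * ‖v β t - v α t‖^2)
          ≤ (n:ℝ)⁻¹ * -(lamf t * (2 * (n:ℝ) * V2 t)) := h6
        _ = -(2 * lamf t * V2 t) := by field_simp
    linarith
  -- Gronwall via monotonicity
  set g : ℝ → ℝ := fun t => V2 t * Real.exp (2 * ψ t) with hg
  have hgderiv : ∀ t ≥ (0:ℝ), HasDerivAt g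
      ((W t + 2 * lamf t * V2 t) * Real.exp (2 * ψ t)) t := by
    intro t ht
    have h1 : HasDerivAt (fun s => Real.exp (2 * ψ s))
        (Real.exp (2 * ψ t) * (2 * lamf t)) t :=
      (((hψ t ht).const_mul 2).exp)
    have := (hV2deriv t ht).mul h1
    refine this.congr_deriv ?_; ring
  intro t ht
  have hanti : g t ≤ g 0 := by
    rcases eq_or_lt_of_le ht with h | h
    · rw [← h]
    · have := antitoneOn_of_deriv_nonpos (convex_Ici (0:ℝ))
        (fun s hs => (hgderiv s hs).continuousAt.continuousWithinAt)
        (fun s hs => by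
          rw [interior_Ici] at hs
          exact (hgderiv s (le_of_lt hs)).differentiableAt.differentiableWithinAt)
        (fun s hs => by
          rw [interior_Ici] at hs
          rw [(hgderiv s (le_of_lt hs)).deriv]
          have := hkey s (le_of_lt hs)
          have he : (0:ℝ) < Real.exp (2 * ψ s) := Real.exp_pos _
          nlinarith)
      exact this (Set.self_mem_Ici) (Set.mem_Ici.2 ht) ht
  have hg0 : g 0 = V2 0 := by rw [hg]; simp [hψ0]
  have hle : V2 t * Real.exp (2 * ψ t) ≤ V2 0 := by rw [← hg0]; exact hanti
  have he : (0:ℝ) < Real.exp (2 * ψ t) := Real.exp_pos _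
  have hexp : Real.exp (-2 * ψ t) = (Real.exp (2 * ψ t))⁻¹ := by
    rw [← Real.exp_neg]; ring_nf
  rw [hexp]
  calc V2 t = V2 t * Real.exp (2 * ψ t) * (Real.exp (2 * ψ t))⁻¹ := by field_simp
    _ ≤ V2 0 * (Real.exp (2 * ψ t))⁻¹ :=
        mul_le_mul_of_nonneg_right hle (inv_pos.2 he).le

set_option synthInstance.maxHeartbeats 400000 in
lemma ftc_bound {n d : ℕ}
    (x u : Fin n → ℝ → EuclideanSpace ℝ (Fin d))
    (hx : ∀ α, ∀ t ≥ (0:ℝ), HasDerivAt (x α) (u α t) t)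
    (hucont : ∀ α, ∀ t ≥ (0:ℝ), ContinuousAt (u α) t)
    (B : ℝ → ℝ) {t : ℝ} (ht : (0:ℝ) ≤ t)
    (hBcont : ContinuousOn B (Icc 0 t))
    (hB : ∀ s ∈ Icc (0:ℝ) t, Real.sqrt (∑ α, ‖u α s‖^2) ≤ B s) :
    Real.sqrt (∑ α, ‖x α t‖^2) ≤ Real.sqrt (∑ α, ‖x α 0‖^2) + ∫ s in (0:ℝ)..t, B s := by
  set L := (PiLp.continuousLinearEquiv 2 ℝ (fun _ : Fin n => EuclideanSpace ℝ (Fin d))).symm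
  set Xv : ℝ → PiLp 2 (fun _ : Fin n => EuclideanSpace ℝ (Fin d)) := fun s => L (fun α => x α s) with hXv
  set Uv : ℝ → PiLp 2 (fun _ : Fin n => EuclideanSpace ℝ (Fin d)) := fun s => L (fun α => u α s) with hUv
  have hXderiv : ∀ s ∈ Icc (0:ℝ) t, HasDerivAt Xv (Uv s) s := by
    intro s hs
    have h1 : HasDerivAt (fun r => (fun α => x α r)) (fun α => u α s) s :=
      hasDerivAt_pi.2 fun α => hx α s hs.1
    exact (L.toContinuousLinearMap.hasFDerivAt.comp_hasDerivAt s h1)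
  have hUcont : ContinuousOn Uv (Icc 0 t) := by
    refine fun s hs => ContinuousAt.continuousWithinAt ?_
    exact L.continuous.continuousAt.comp (continuousAt_pi.2 fun α => hucont α s hs.1)
  have hUint : IntervalIntegrable Uv MeasureTheory.volume 0 t :=
    (hUcont.mono (by rw [Set.uIcc_of_le ht])).intervalIntegrable
  have hftc : ∫ s in (0:ℝ)..t, Uv s = Xv t - Xv 0 :=
    intervalIntegral.integral_eq_sub_of_hasDerivAt
      (fun s hs => hXderiv s (by rwa [Set.uIcc_of_le ht] at hs)) hUint
  have hnorm : ∀ s, ‖Uv s‖ = Real.sqrt (∑ α, ‖u α s‖^2) := by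
    intro s
    rw [PiLp.norm_eq_of_L2]
    rfl
  have hXnorm : ∀ s, ‖Xv s‖ = Real.sqrt (∑ α, ‖x α s‖^2) := by
    intro s
    rw [PiLp.norm_eq_of_L2]
    rfl
  have step1 : ‖Xv t‖ ≤ ‖Xv 0‖ + ‖Xv t - Xv 0‖ := by
    have := norm_sub_norm_le (Xv t) (Xv 0)
    linarith [norm_sub_norm_le (Xv t) (Xv 0)]
  have step2 : ‖Xv t - Xv 0‖ ≤ ∫ s in (0:ℝ)..t, ‖Uv s‖ := by
    rw [← hftc]
    exact intervalIntegral.norm_integral_le_integral_norm ht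
  have step3 : (∫ s in (0:ℝ)..t, ‖Uv s‖) ≤ ∫ s in (0:ℝ)..t, B s := by
    apply intervalIntegral.integral_mono_on ht hUint.norm
      (hBcont.intervalIntegrable_of_Icc ht)
    intro s hs
    rw [hnorm]
    exact hB s hs
  rw [← hXnorm, ← hXnorm]
  linarith

theorem stmt6 (n d : ℕ) (hn : 1 ≤ n) (lam : ℝ) (hlam0 : 0 < lam) (hlam : lam ≤ 1 / 2)
    (T₀ : ℝ)
    (x u : Fin n → ℝ → EuclideanSpace ℝ (Fin d)) (T : Fin n → ℝ → ℝ)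
    (hx : ∀ α, ∀ t ≥ (0 : ℝ), HasDerivAt (x α) (u α t) t)
    (hu : ∀ α, ∀ t ≥ (0 : ℝ), HasDerivAt (u α)
      ((n : ℝ)⁻¹ • ∑ β, ((1 + ‖x β t - x α t‖ ^ 2) ^ (-lam)) • (u β t - u α t)) t)
    (hT : ∀ α, ∀ t ≥ (0 : ℝ), HasDerivAt (fun s => T α s + ‖u α s‖ ^ 2 / 2)
      ((n : ℝ)⁻¹ * ∑ β, ((1 + ‖x β t - x α t‖ ^ 2) ^ (-lam)) *
        ((T β t + ‖u β t‖ ^ 2 / 2) - (T α t + ‖u α t‖ ^ 2 / 2))) t)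
    (hx0 : ∑ α, x α 0 = 0) (hu0 : ∑ α, u α 0 = 0)
    (hT0 : (n : ℝ)⁻¹ * ∑ α, (T α 0 + ‖u α 0‖ ^ 2 / 2) = T₀)
    (Λ₀ : ℝ)
    (hΛ : Λ₀ = (max (1 + 2 * ∑ α, ‖x α 0‖ ^ 2) (2 * ∑ α, ‖u α 0‖ ^ 2)) ^ (-lam))
    (D : ℝ → ℝ)
    (hD : D = fun s => if lam < 1 / 2 then
        Real.exp (-(Λ₀ / (1 - 2 * lam)) * ((1 + s) ^ (1 - 2 * lam) - 1))
      else (1 + s) ^ (-Λ₀)) :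
    ∀ t ≥ (0 : ℝ),
      (lam < 1 / 2 →
        Real.sqrt (∑ α, ‖u α t‖ ^ 2) ≤ Real.sqrt (∑ α, ‖u α 0‖ ^ 2) *
          Real.exp (-(Λ₀ / (1 - 2 * lam)) * ((1 + t) ^ (1 - 2 * lam) - 1)) ∧
        Real.sqrt (∑ α, (T α t + ‖u α t‖ ^ 2 / 2 - T₀) ^ 2) ≤
          Real.sqrt (∑ α, (T α 0 + ‖u α 0‖ ^ 2 / 2 - T₀) ^ 2) *
            Real.exp (-(Λ₀ / (1 - 2 * lam)) * ((1 + t) ^ (1 - 2 * lam) - 1))) ∧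
      (lam = 1 / 2 →
        Real.sqrt (∑ α, ‖u α t‖ ^ 2) ≤
          Real.sqrt (∑ α, ‖u α 0‖ ^ 2) * (1 + t) ^ (-Λ₀) ∧
        Real.sqrt (∑ α, (T α t + ‖u α t‖ ^ 2 / 2 - T₀) ^ 2) ≤
          Real.sqrt (∑ α, (T α 0 + ‖u α 0‖ ^ 2 / 2 - T₀) ^ 2) * (1 + t) ^ (-Λ₀)) ∧
      Real.sqrt (∑ α, ‖x α t‖ ^ 2) ≤ Real.sqrt (∑ α, ‖x α 0‖ ^ 2) +
        Real.sqrt (∑ α, ‖u α 0‖ ^ 2) * ∫ s in (0 : ℝ)..t, D s := by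
  have hn0 : 0 < n := hn
  set A : Fin n → Fin n → ℝ → ℝ := fun α β t => (1 + ‖x β t - x α t‖ ^ 2) ^ (-lam)
    with hAdef
  have hAsymm : ∀ α β t, A α β t = A β α t := by
    intro α β t; simp only [hAdef]; rw [norm_sub_rev]
  have hAbase : ∀ α β t, (0:ℝ) < 1 + ‖x β t - x α t‖ ^ 2 := fun α β t => by positivity
  have hA0 : ∀ α β, ∀ t ≥ (0:ℝ), (0:ℝ) ≤ A α β t := fun α β t _ =>
    (Real.rpow_pos_of_pos (hAbase α β t) _).le
  have hu' : ∀ α, ∀ t ≥ (0:ℝ), HasDerivAt (u α)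
      ((n:ℝ)⁻¹ • ∑ β, A α β t • (u β t - u α t)) t := hu
  -- crude velocity bound
  have hVcrude : ∀ t ≥ (0:ℝ), ∑ α, ‖u α t‖ ^ 2 ≤ ∑ α, ‖u α 0‖ ^ 2 := by
    intro t ht
    have := decay_lemma hn0 u A hAsymm hu' hu0 (fun _ => 0) (fun _ => 0)
      (fun s _ => hasDerivAt_const s 0) rfl (fun α β s hs => hA0 α β s hs) t ht
    simpa using this
  have hucont : ∀ α, ∀ t ≥ (0:ℝ), ContinuousAt (u α) t := fun α t ht =>
    (hu α t ht).continuousAt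
  set V0 : ℝ := Real.sqrt (∑ α, ‖u α 0‖ ^ 2) with hV0
  set X0 : ℝ := Real.sqrt (∑ α, ‖x α 0‖ ^ 2) with hX0
  have hV0nn : 0 ≤ V0 := Real.sqrt_nonneg _
  have hX0nn : 0 ≤ X0 := Real.sqrt_nonneg _
  -- crude position bound
  have hXcrude : ∀ t ≥ (0:ℝ), Real.sqrt (∑ α, ‖x α t‖ ^ 2) ≤ X0 + V0 * t := by
    intro t ht
    have := ftc_bound x u hx hucont (fun _ => V0) ht continuousOn_const
      (fun s hs => Real.sqrt_le_sqrt (hVcrude s hs.1))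
    rw [intervalIntegral.integral_const, smul_eq_mul, sub_zero] at this
    calc Real.sqrt (∑ α, ‖x α t‖ ^ 2) ≤ X0 + t * V0 := this
      _ = X0 + V0 * t := by ring
  -- bound on weights
  set M : ℝ := max (1 + 2 * ∑ α, ‖x α 0‖ ^ 2) (2 * ∑ α, ‖u α 0‖ ^ 2) with hM
  have hX20 : (0:ℝ) ≤ ∑ α, ‖x α 0‖ ^ 2 := by positivity
  have hM1 : 1 + 2 * ∑ α, ‖x α 0‖ ^ 2 ≤ M := le_max_left _ _
  have hM2 : 2 * ∑ α, ‖u α 0‖ ^ 2 ≤ M := le_max_right _ _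
  have hMone : (1:ℝ) ≤ M := le_trans (by linarith) hM1
  have hMpos : (0:ℝ) < M := lt_of_lt_of_le one_pos hMone
  set lamf : ℝ → ℝ := fun t => Λ₀ * (1 + t) ^ (-(2 * lam)) with hlamf
  have hAbound : ∀ α β, ∀ t ≥ (0:ℝ), lamf t ≤ A α β t := by
    intro α β t ht
    have h1t : (0:ℝ) < 1 + t := by linarith
    have hx2 : ‖x β t - x α t‖ ^ 2 ≤ 2 * ∑ γ, ‖x γ t‖ ^ 2 := by
      rcases eq_or_ne β α with h | h
      · subst h; simp; positivity
      · have hsub : ‖x β t - x α t‖ ^ 2 ≤ 2 * (‖x β t‖ ^ 2 + ‖x α t‖ ^ 2) := by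
          have h1 := norm_sub_le (x β t) (x α t)
          have h2 : ‖x β t - x α t‖ ^ 2 ≤ (‖x β t‖ + ‖x α t‖) ^ 2 :=
            pow_le_pow_left₀ (norm_nonneg _) h1 2
          nlinarith [sq_nonneg (‖x β t‖ - ‖x α t‖)]
        have hpair : ‖x β t‖ ^ 2 + ‖x α t‖ ^ 2 ≤ ∑ γ, ‖x γ t‖ ^ 2 := by
          have := Finset.sum_le_sum_of_subset_of_nonneg
            (f := fun γ => ‖x γ t‖ ^ 2)
            (Finset.subset_univ ({β, α} : Finset (Fin n)))
            (fun γ _ _ => by positivity)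
          rwa [Finset.sum_pair h] at this
        linarith
    have hs := hXcrude t ht
    have hsq : (Real.sqrt (∑ γ, ‖x γ t‖ ^ 2)) ^ 2 = ∑ γ, ‖x γ t‖ ^ 2 :=
      Real.sq_sqrt (by positivity)
    have hX0sq : X0 ^ 2 = ∑ α, ‖x α 0‖ ^ 2 := Real.sq_sqrt hX20
    have hV0sq : V0 ^ 2 = ∑ α, ‖u α 0‖ ^ 2 := Real.sq_sqrt (by positivity)
    have hM1' : 1 + 2 * X0 ^ 2 ≤ M := by rw [hX0sq]; exact hM1
    have hM2' : 2 * V0 ^ 2 ≤ M := by rw [hV0sq]; exact hM2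
    have hbase : 1 + ‖x β t - x α t‖ ^ 2 ≤ M * (1 + t) ^ 2 := by
      have hsnn : 0 ≤ Real.sqrt (∑ γ, ‖x γ t‖ ^ 2) := Real.sqrt_nonneg _
      have hs2 : ∑ γ, ‖x γ t‖ ^ 2 ≤ (X0 + V0 * t) ^ 2 := by
        rw [← hsq]; exact pow_le_pow_left₀ hsnn hs 2
      exact quad_bound _ _ _ _ _ _ ht hx2 hs2 hM1' hM2'
    have hstep : (M * (1 + t) ^ 2) ^ (-lam) ≤ (1 + ‖x β t - x α t‖ ^ 2) ^ (-lam) :=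
      Real.rpow_le_rpow_of_nonpos (hAbase α β t) hbase (by linarith)
    refine le_trans (le_of_eq ?_) hstep
    rw [Real.mul_rpow hMpos.le (by positivity)]
    rw [hlamf, hΛ]
    show M ^ (-lam) * (1 + t) ^ (-(2 * lam)) = M ^ (-lam) * ((1 + t) ^ 2) ^ (-lam)
    congr 1
    rw [← Real.rpow_natCast (1 + t) 2, ← Real.rpow_mul h1t.le]
    congr 1
    push_cast
    ring
  -- define ψ
  set ψ : ℝ → ℝ := fun t => if lam < 1/2 then
      Λ₀ / (1 - 2 * lam) * ((1 + t) ^ (1 - 2 * lam) - 1)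
    else Λ₀ * Real.log (1 + t) with hψdef
  have hψ0 : ψ 0 = 0 := by
    rw [hψdef]; by_cases hc : lam < 1/2 <;> simp [hc]
  have hψderiv : ∀ t ≥ (0:ℝ), HasDerivAt ψ (lamf t) t := by
    intro t ht
    have h1t : (0:ℝ) < 1 + t := by linarith
    have hadd : HasDerivAt (fun s : ℝ => 1 + s) 1 t := by
      simpa using (hasDerivAt_id t).const_add (1:ℝ)
    by_cases hc : lam < 1/2
    · have hne : (1:ℝ) - 2 * lam ≠ 0 := by intro h; rw [sub_eq_zero] at h; linarith
      have hr : HasDerivAt (fun y : ℝ => y ^ (1 - 2*lam))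
          ((1 - 2*lam) * (1 + t) ^ (1 - 2*lam - 1)) (1 + t) :=
        Real.hasDerivAt_rpow_const (Or.inl h1t.ne')
      have hcomp : HasDerivAt (fun s : ℝ => (1 + s) ^ (1 - 2*lam))
          ((1 - 2*lam) * (1 + t) ^ (1 - 2*lam - 1)) t := by
        have := HasDerivAt.comp t hr hadd
        simpa [Function.comp_def] using this
      have : HasDerivAt ψ
          (Λ₀ / (1 - 2*lam) * ((1 - 2*lam) * (1 + t) ^ (1 - 2*lam - 1))) t := by
        rw [hψdef]
        simp only [if_pos hc]
        exact ((hcomp.sub_const 1).const_mul _)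
      convert this using 1
      rw [hlamf]
      field_simp
      ring_nf
    · have hlam2 : lam = 1/2 := le_antisymm hlam (not_lt.1 hc)
      have hlog : HasDerivAt (fun s : ℝ => Real.log (1 + s)) ((1+t)⁻¹) t := by
        have := (Real.hasDerivAt_log h1t.ne').comp t hadd
        simpa [Function.comp_def] using this
      have : HasDerivAt ψ (Λ₀ * (1+t)⁻¹) t := by
        rw [hψdef]
        simp only [if_neg hc]
        exact hlog.const_mul _
      convert this using 1
      have hexp1 : (-(2*lam)) = (-1 : ℝ) := by rw [hlam2]; norm_num
      rw [hlamf]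
      show Λ₀ * (1 + t) ^ (-(2 * lam)) = Λ₀ * (1 + t)⁻¹
      rw [hexp1, Real.rpow_neg_one]
  have hDψ : ∀ s ≥ (0:ℝ), D s = Real.exp (-ψ s) := by
    intro s hs
    have h1s : (0:ℝ) < 1 + s := by linarith
    rw [hD, hψdef]
    by_cases hc : lam < 1/2
    · simp only [if_pos hc]
      congr 1; ring
    · simp only [if_neg hc]
      rw [Real.rpow_def_of_pos h1s]
      congr 1; ring
  -- velocity decay
  have hVdec : ∀ t ≥ (0:ℝ), ∑ α, ‖u α t‖ ^ 2 ≤ (∑ α, ‖u α 0‖ ^ 2) *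
      Real.exp (-2 * ψ t) :=
    decay_lemma hn0 u A hAsymm hu' hu0 lamf ψ hψderiv hψ0 hAbound
  -- energy decay
  set e : Fin n → ℝ → ℝ := fun α s => T α s + ‖u α s‖ ^ 2 / 2 - T₀ with hedef
  have he : ∀ α, ∀ t ≥ (0:ℝ), HasDerivAt (e α)
      ((n:ℝ)⁻¹ • ∑ β, A α β t • (e β t - e α t)) t := by
    intro α t ht
    have := (hT α t ht).sub_const T₀
    refine this.congr_deriv (Eq.symm ?_)
    simp only [smul_eq_mul, hedef]
    congr 1
    exact Finset.sum_congr rfl fun β _ => by ring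
  have he0 : ∑ α, e α 0 = 0 := by
    have hTsum : ∑ α, (T α 0 + ‖u α 0‖ ^ 2 / 2) = n * T₀ := by
      have hnne : ((n:ℝ)) ≠ 0 := Nat.cast_ne_zero.2 hn0.ne'
      rw [← hT0]
      rw [← mul_assoc, mul_inv_cancel₀ hnne, one_mul]
    simp only [hedef, Finset.sum_sub_distrib, hTsum, Finset.sum_const,
      Finset.card_univ, Fintype.card_fin, nsmul_eq_mul, mul_one, sub_self]
  have hEdec : ∀ t ≥ (0:ℝ), ∑ α, (e α t) ^ 2 ≤ (∑ α, (e α 0) ^ 2) *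
      Real.exp (-2 * ψ t) := by
    intro t ht
    have := decay_lemma (F := ℝ) hn0 e A hAsymm he he0 lamf ψ hψderiv hψ0 hAbound t ht
    simpa [Real.norm_eq_abs, sq_abs] using this
  -- sqrt form
  have sqrt_form : ∀ (a b c : ℝ), 0 ≤ b → a ≤ b * Real.exp (-2 * c) →
      Real.sqrt a ≤ Real.sqrt b * Real.exp (-c) := by
    intro a b c hb h
    have h1 : Real.sqrt a ≤ Real.sqrt (b * Real.exp (-2 * c)) := Real.sqrt_le_sqrt h
    rw [Real.sqrt_mul hb] at h1
    rwa [show (-2*c) = (-c) + (-c) by ring, Real.exp_add, ← sq,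
      Real.sqrt_sq (Real.exp_pos _).le] at h1
  intro t ht
  have hVt : Real.sqrt (∑ α, ‖u α t‖ ^ 2) ≤ V0 * Real.exp (-ψ t) :=
    sqrt_form _ _ _ (by positivity) (hVdec t ht)
  have hEt : Real.sqrt (∑ α, (e α t) ^ 2) ≤
      Real.sqrt (∑ α, (e α 0) ^ 2) * Real.exp (-ψ t) :=
    sqrt_form _ _ _ (by positivity) (hEdec t ht)
  have hDcont : ContinuousOn D (Icc 0 t) := by
    intro s hs
    have h1s : (0:ℝ) < 1 + s := by linarith [hs.1]
    rw [hD]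
    have hin : ContinuousAt (fun r : ℝ => (1:ℝ) + r) s :=
      continuousAt_const.add continuousAt_id
    by_cases hc : lam < 1/2
    · simp only [if_pos hc]
      apply ContinuousAt.continuousWithinAt
      have h1 : ContinuousAt (fun r : ℝ => (1 + r) ^ (1 - 2*lam)) s :=
        (Real.continuousAt_rpow_const _ _ (Or.inl h1s.ne')).comp hin
      exact Real.continuous_exp.continuousAt.comp
        (continuousAt_const.mul (h1.sub continuousAt_const))
    · simp only [if_neg hc]
      exact ContinuousAt.continuousWithinAt
        ((Real.continuousAt_rpow_const _ _ (Or.inl h1s.ne')).comp hin)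
  have hXfinal : Real.sqrt (∑ α, ‖x α t‖ ^ 2) ≤ X0 + V0 * ∫ s in (0:ℝ)..t, D s := by
    have hbd : ∀ s ∈ Icc (0:ℝ) t, Real.sqrt (∑ α, ‖u α s‖ ^ 2) ≤ V0 * D s := by
      intro s hs
      rw [hDψ s hs.1]
      exact sqrt_form _ _ _ (by positivity) (hVdec s hs.1)
    have := ftc_bound x u hx hucont (fun s => V0 * D s) ht
      (continuousOn_const.mul hDcont) hbd
    rwa [intervalIntegral.integral_const_mul] at this
  refine ⟨fun hc => ⟨?_, ?_⟩, fun hc => ⟨?_, ?_⟩, hXfinal⟩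
  · convert hVt using 2
    rw [hψdef]; simp only [if_pos hc]; ring
  · convert hEt using 2
    rw [hψdef]; simp only [if_pos hc]; ring
  · have hnc : ¬ lam < 1/2 := by rw [hc]; simp
    have : (1 + t) ^ (-Λ₀) = Real.exp (-ψ t) := by
      rw [Real.rpow_def_of_pos (by linarith), hψdef]
      simp only [if_neg hnc]
      congr 1; ring
    rw [this]; exact hVt
  · have hnc : ¬ lam < 1/2 := by rw [hc]; simp
    have : (1 + t) ^ (-Λ₀) = Real.exp (-ψ t) := by
      rw [Real.rpow_def_of_pos (by linarith), hψdef]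
      simp only [if_neg hnc]
      congr 1; ring
    rw [this]; exact hEt
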